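/- Let E and Y be real normed vector spaces, let K ⊆ E be a convex set, and let F, G : E → Y be maps that are Fréchet differentiable at every point of E. Let S > 0 and assume: (i) ‖x − x'‖ ≤ S·‖F(x) − F(x')‖ for all x, x' ∈ K; and (ii) ‖DF(x) − DG(x)‖ ≤ 1/(2S) in operator norm for all x ∈ K. Then ‖x − x'‖ ≤ 2S·‖G(x) − G(x')‖ for all x, x' ∈ K. -/

import Mathlib

/-- The nonlinear perturbed-stability argument (variant of Theorem 2(ii) of
Alberti–Santacesaria) used for estimate (4.3) in Theorem 3.4(ii): if `F` is stable
with constant `S` on a convex set `K` and the derivatives of `F` and `G` differ by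
at most `1/(2S)` in operator norm on `K`, then `G` is stable with constant `2S`
on `K`. -/
theorem stmt7 {E Y : Type*} [NormedAddCommGroup E] [NormedSpace ℝ E]
    [NormedAddCommGroup Y] [NormedSpace ℝ Y]
    (K : Set E) (hKconv : Convex ℝ K)
    (F G : E → Y) (hF : Differentiable ℝ F) (hG : Differentiable ℝ G)
    (S : ℝ) (hS : 0 < S)
    (hstab : ∀ x ∈ K, ∀ x' ∈ K, ‖x - x'‖ ≤ S * ‖F x - F x'‖)
    (hclose : ∀ x ∈ K, ‖fderiv ℝ F x - fderiv ℝ G x‖ ≤ 1 / (2 * S)) :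
    ∀ x ∈ K, ∀ x' ∈ K, ‖x - x'‖ ≤ 2 * S * ‖G x - G x'‖ := by
  intro x hx x' hx'
  have hdiff : ∀ z ∈ K, DifferentiableAt ℝ (fun y => F y - G y) z :=
    fun z _ => (hF z).sub (hG z)
  have hbound : ∀ z ∈ K, ‖fderiv ℝ (fun y => F y - G y) z‖ ≤ 1 / (2 * S) := by
    intro z hz
    rw [fderiv_fun_sub (hF z) (hG z)]
    exact hclose z hz
  have key : ‖(F x - G x) - (F x' - G x')‖ ≤ 1 / (2 * S) * ‖x - x'‖ :=
    hKconv.norm_image_sub_le_of_norm_fderiv_le hdiff hbound hx' hx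
  have h1 : ‖F x - F x'‖ ≤ ‖G x - G x'‖ + 1 / (2 * S) * ‖x - x'‖ := by
    calc ‖F x - F x'‖ = ‖(G x - G x') + ((F x - G x) - (F x' - G x'))‖ := by rw [show G x - G x' + (F x - G x - (F x' - G x')) = F x - F x' by abel]
      _ ≤ ‖G x - G x'‖ + ‖(F x - G x) - (F x' - G x')‖ := norm_add_le _ _
      _ ≤ _ := by linarith
  have h2 := hstab x hx x' hx'
  have h3 : ‖x - x'‖ ≤ S * ‖G x - G x'‖ + 1 / 2 * ‖x - x'‖ := by
    have := mul_le_mul_of_nonneg_left h1 hS.le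
    have hS' : S * (1 / (2 * S) * ‖x - x'‖) = 1 / 2 * ‖x - x'‖ := by
      field_simp
    linarith [h2, this, hS'.le]
  linarith
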